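/- Let f : X → Y be a k-biLipschitz bijection between finite non-trivial metric spaces with k ≥ 1. Then the normalized bottleneck distance satisfies d_N(X, Y) ≤ ((k² − 1)/k) · diam(X)/diam(Y). -/

import Mathlib

noncomputable def maxnorm {n : ℕ} (M : Fin n → Fin n → ℝ) : ℝ :=
  sSup (Set.range fun p : Fin n × Fin n => |M p.1 p.2|)

def IsMetricD {n : ℕ} (d : Fin n → Fin n → ℝ) : Prop :=
  (∀ i, d i i = 0) ∧ (∀ i j, d i j = d j i) ∧
  (∀ i j k, d i k ≤ d i j + d j k) ∧ (∀ i j, i ≠ j → 0 < d i j)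

noncomputable def diamD {n : ℕ} (d : Fin n → Fin n → ℝ) : ℝ :=
  sSup (Set.range fun p : Fin n × Fin n => d p.1 p.2)

/-- Sup-norm distance between two points of the plane. -/
noncomputable def supDist (p q : ℝ × ℝ) : ℝ := max |p.1 - q.1| |p.2 - q.2|

/-- Distance from a point to the diagonal (in the sup norm). -/
noncomputable def diagCost (p : ℝ × ℝ) : ℝ := (p.2 - p.1) / 2

/-- A partial matching between the off-diagonal points of two persistence diagrams;
unmatched points are implicitly matched to the diagonal. -/
def IsMatching (A B : Finset (ℝ × ℝ)) (M : Finset ((ℝ × ℝ) × (ℝ × ℝ))) : Prop :=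
  (∀ pq ∈ M, pq.1 ∈ A ∧ pq.2 ∈ B) ∧
  (∀ pq ∈ M, ∀ pq' ∈ M, pq.1 = pq'.1 → pq = pq') ∧
  (∀ pq ∈ M, ∀ pq' ∈ M, pq.2 = pq'.2 → pq = pq')

/-- Cost of a matching: the largest sup-norm displacement, where unmatched
points are sent to the diagonal. -/
noncomputable def matchCost (A B : Finset (ℝ × ℝ)) (M : Finset ((ℝ × ℝ) × (ℝ × ℝ))) : ℝ :=
  sSup ({0} ∪ ((fun pq : (ℝ × ℝ) × (ℝ × ℝ) => supDist pq.1 pq.2) '' (M : Set ((ℝ × ℝ) × (ℝ × ℝ))))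
    ∪ (diagCost '' {p | p ∈ A ∧ ∀ pq ∈ M, pq.1 ≠ p})
    ∪ (diagCost '' {q | q ∈ B ∧ ∀ pq ∈ M, pq.2 ≠ q}))

/-- Bottleneck distance between two persistence diagrams (finite multisets of
off-diagonal points, with the diagonal implicitly available with infinite multiplicity). -/
noncomputable def dB (A B : Finset (ℝ × ℝ)) : ℝ :=
  sInf ((matchCost A B) '' {M | IsMatching A B M})

/-- Scaling of a persistence diagram: `sA = {s·a : a ∈ A}`. -/
noncomputable def scaleD (s : ℝ) (A : Finset (ℝ × ℝ)) : Finset (ℝ × ℝ) :=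
  A.image fun p => (s * p.1, s * p.2)

/-- Normalized bottleneck distance: bottleneck distance between the Vietoris-Rips
persistence diagrams of the diameter-normalized metric spaces. -/
noncomputable def dN (dgm : (n : ℕ) → (Fin n → Fin n → ℝ) → Finset (ℝ × ℝ))
    {n m : ℕ} (dX : Fin n → Fin n → ℝ) (dY : Fin m → Fin m → ℝ) : ℝ :=
  dB (dgm n fun i j => dX i j / diamD dX) (dgm m fun i j => dY i j / diamD dY)

/-- For a `k`-biLipschitz bijection `f : X → Y` (identified with the identity on
indices via distance matrices), `d_N(X, Y) ≤ ((k² − 1)/k)·diam(X)/diam(Y)`. -/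
theorem stmt19 (dgm : (n : ℕ) → (Fin n → Fin n → ℝ) → Finset (ℝ × ℝ))
    (hstab : ∀ (n : ℕ) (d e : Fin n → Fin n → ℝ), IsMetricD d → IsMetricD e →
      dB (dgm n d) (dgm n e) ≤ maxnorm (fun i j => d i j - e i j))
    {n : ℕ} (dX dY : Fin n → Fin n → ℝ)
    (hX : IsMetricD dX) (hY : IsMetricD dY)
    (hdX : 0 < diamD dX) (hdY : 0 < diamD dY)
    (k : ℝ) (hk : 1 ≤ k)
    (hbl : ∀ i j, (1 / k) * dX i j ≤ dY i j ∧ dY i j ≤ k * dX i j) :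
    dN dgm dX dY ≤ ((k ^ 2 - 1) / k) * (diamD dX / diamD dY) := by

  have hk0 : (0:ℝ) < k := lt_of_lt_of_le one_pos hk
  have hA := hdX
  have hB := hdY
  -- basic facts
  have hXnn : ∀ i j, 0 ≤ dX i j := by
    intro i j
    rcases eq_or_ne i j with h | h
    · simp [h, hX.1]
    · exact (hX.2.2.2 i j h).le
  have hbdd : ∀ (g : Fin n × Fin n → ℝ), BddAbove (Set.range g) :=
    fun g => (Set.finite_range g).bddAbove
  have hleX : ∀ i j, dX i j ≤ diamD dX := fun i j => le_csSup (hbdd _) ⟨(i, j), rfl⟩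
  have hBkA : diamD dY ≤ k * diamD dX := by
    apply Real.sSup_le
    · rintro x ⟨⟨i, j⟩, rfl⟩
      exact (hbl i j).2.trans (mul_le_mul_of_nonneg_left (hleX i j) hk0.le)
    · positivity
  have hkX : ∀ i j, dX i j ≤ k * dY i j := by
    intro i j
    have h := (hbl i j).1
    have := mul_le_mul_of_nonneg_left h hk0.le
    calc dX i j = k * ((1 / k) * dX i j) := by field_simp
    _ ≤ k * dY i j := this
  have hAkB : diamD dX ≤ k * diamD dY := by
    apply Real.sSup_le
    · rintro x ⟨⟨i, j⟩, rfl⟩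
      have hleY : dY i j ≤ diamD dY := le_csSup (hbdd _) ⟨(i, j), rfl⟩
      exact (hkX i j).trans (mul_le_mul_of_nonneg_left hleY hk0.le)
    · positivity
  -- scaled metrics
  have hscale : ∀ (d : Fin n → Fin n → ℝ), IsMetricD d → ∀ c : ℝ, 0 < c →
      IsMetricD (fun i j => d i j / c) := by
    rintro d ⟨h1, h2, h3, h4⟩ c hc
    refine ⟨fun i => by simp [h1], fun i j => by simp [h2 i j], fun i j l => ?_, fun i j h => div_pos (h4 i j h) hc⟩
    rw [← add_div]
    exact (div_le_div_iff_of_pos_right hc).mpr (h3 i j l)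
  have key := hstab n (fun i j => dX i j / diamD dX) (fun i j => dY i j / diamD dY)
    (hscale dX hX _ hdX) (hscale dY hY _ hdY)
  refine le_trans key ?_
  apply Real.sSup_le
  · rintro x ⟨⟨i, j⟩, rfl⟩
    simp only
    set A := diamD dX with hAdef
    set B := diamD dY with hBdef
    set a := dX i j
    set b := dY i j
    have ha0 : 0 ≤ a := hXnn i j
    have haA : a ≤ A := hleX i j
    have hab1 : a ≤ k * b := hkX i j
    have hab2 : b ≤ k * a := (hbl i j).2
    rw [abs_sub_le_iff]
    constructor
    · rw [div_sub_div _ _ hA.ne' hB.ne', div_mul_div_comm,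
        div_le_div_iff₀ (mul_pos hA hB) (mul_pos hk0 hB)]
      have h6 : A * a ≤ A * (k * b) := mul_le_mul_of_nonneg_left hab1 hA.le
      have h2 : 0 ≤ (A - a) * (k * B - A) :=
        mul_nonneg (by linarith) (by linarith)
      have h7 : A * (k * B) ≤ A * (k * (k * A)) :=
        mul_le_mul_of_nonneg_left (mul_le_mul_of_nonneg_left hBkA hk0.le) hA.le
      nlinarith [h2, h6, h7, mul_pos hA hB, hB.le]
    · rw [div_sub_div _ _ hB.ne' hA.ne', div_mul_div_comm,
        div_le_div_iff₀ (mul_pos hB hA) (mul_pos hk0 hB)]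
      have g1 : 0 ≤ k * ((A - a) * (k * A - B)) :=
        mul_nonneg hk0.le (mul_nonneg (by linarith) (by linarith))
      have h6 : (k * A) * b ≤ (k * A) * (k * a) :=
        mul_le_mul_of_nonneg_left hab2 (mul_nonneg hk0.le hA.le)
      have h7 : A * A ≤ A * (k * B) := mul_le_mul_of_nonneg_left hAkB hA.le
      nlinarith [g1, h6, h7, mul_pos hA hB, hB.le]
  · have h1 : (0:ℝ) ≤ (k ^ 2 - 1) / k := by
      apply div_nonneg _ hk0.le
      nlinarith
    positivity
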